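/- arXiv:2512.18700 — 3 statements merged into one kernel-verified Lean document; each statement's English description precedes it below -/
import Mathlib

section
/- Let α, p, C₁, C₂ be real constants with α ≠ 1, and define v(θ) = C₁ · (cos(θ + C₂))^(1-α) and f(θ) = C₁ · (cos(θ + C₂))^(-α) · sin(θ + C₂) on an interval where cos(θ + C₂) > 0. Then (v, f) with p = 0 satisfies the homogeneous Euler ODE system: (1-α)·f(θ) + v'(θ) = 0 and v(θ)·f'(θ) = α·f(θ)² + v(θ)² + 2αp. -/
open Real

theorem homogeneous_euler_ode_p_zero
    (α p C₁ C₂ : ℝ) (hα : α ≠ 1) (hp : p = 0)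
    (v f : ℝ → ℝ)
    (hv : ∀ θ, v θ = C₁ * (Real.cos (θ + C₂)) ^ (1 - α))
    (hf : ∀ θ, f θ = C₁ * (Real.cos (θ + C₂)) ^ (-α) * Real.sin (θ + C₂)) :
    ∀ θ, 0 < Real.cos (θ + C₂) →
      (1 - α) * f θ + deriv v θ = 0 ∧
      v θ * deriv f θ = α * (f θ) ^ 2 + (v θ) ^ 2 + 2 * α * p := by
  intro θ hcos
  have hvfun : v = fun θ => C₁ * (Real.cos (θ + C₂)) ^ (1 - α) := funext hv
  have hffun : f = fun θ => C₁ * (Real.cos (θ + C₂)) ^ (-α) * Real.sin (θ + C₂) :=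
    funext hf
  have hcosne : Real.cos (θ + C₂) ≠ 0 := ne_of_gt hcos
  have hc : HasDerivAt (fun θ : ℝ => Real.cos (θ + C₂)) (-Real.sin (θ + C₂)) θ := by
    have := (Real.hasDerivAt_cos (θ + C₂)).comp θ ((hasDerivAt_id θ).add_const C₂)
    simpa [Function.comp_def] using this
  have hs : HasDerivAt (fun θ : ℝ => Real.sin (θ + C₂)) (Real.cos (θ + C₂)) θ := by
    have := (Real.hasDerivAt_sin (θ + C₂)).comp θ ((hasDerivAt_id θ).add_const C₂)
    simpa [Function.comp_def] using this
  have hr1 : HasDerivAt (fun θ : ℝ => (Real.cos (θ + C₂)) ^ (1 - α))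
      ((1 - α) * (Real.cos (θ + C₂)) ^ (-α) * (-Real.sin (θ + C₂))) θ := by
    have h := hc.rpow_const (p := 1 - α) (Or.inl hcosne)
    have e : (1 : ℝ) - α - 1 = -α := by ring
    rw [e] at h
    convert h using 1; ring
  have hr2 : HasDerivAt (fun θ : ℝ => (Real.cos (θ + C₂)) ^ (-α))
      ((-α) * (Real.cos (θ + C₂)) ^ (-α - 1) * (-Real.sin (θ + C₂))) θ := by
    have h := hc.rpow_const (p := -α) (Or.inl hcosne)
    convert h using 1; ring
  have hv' : HasDerivAt v (C₁ * ((1 - α) * (Real.cos (θ + C₂)) ^ (-α) *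
      (-Real.sin (θ + C₂)))) θ := by
    rw [hvfun]; exact hr1.const_mul C₁
  have hf' : HasDerivAt f (C₁ * ((-α) * (Real.cos (θ + C₂)) ^ (-α - 1) *
      (-Real.sin (θ + C₂))) * Real.sin (θ + C₂) +
      C₁ * (Real.cos (θ + C₂)) ^ (-α) * Real.cos (θ + C₂)) θ := by
    rw [hffun]; exact ((hr2.const_mul C₁).mul hs)
  have h1 : Real.cos (θ + C₂) ^ (1 - α) =
      Real.cos (θ + C₂) * Real.cos (θ + C₂) ^ (-α) := by
    rw [show (1 : ℝ) - α = 1 + (-α) by ring, Real.rpow_add hcos, Real.rpow_one]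
  have h2 : Real.cos (θ + C₂) ^ (-α - 1) =
      Real.cos (θ + C₂) ^ (-α) / Real.cos (θ + C₂) := by
    rw [show -α - 1 = -α + (-1) by ring, Real.rpow_add hcos, Real.rpow_neg_one]
    ring
  constructor
  · rw [hf θ, hv'.deriv]; ring
  · rw [hv θ, hf θ, hf'.deriv, hp, h1, h2]
    field_simp
    ring
end

section
/- Let c ≠ 0 and p be real constants, and suppose f : ℝ → ℝ is a C¹, 2π-periodic function (f(0) = f(2π) with f periodic) that never vanishes and satisfies c·f'(θ) = f(θ)² + c² + 2p for all θ. Then f is a nonzero constant d, and p = -(c² + d²)/2. -/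
open Real

theorem periodic_riccati_constant
    (c p : ℝ) (hc : c ≠ 0)
    (f : ℝ → ℝ) (hf : ContDiff ℝ 1 f)
    (hper : ∀ θ, f (θ + 2 * π) = f θ)
    (hne : ∀ θ, f θ ≠ 0)
    (hode : ∀ θ, c * deriv f θ = (f θ) ^ 2 + c ^ 2 + 2 * p) :
    ∃ d : ℝ, d ≠ 0 ∧ (∀ θ, f θ = d) ∧ p = -(c ^ 2 + d ^ 2) / 2 := by
  have hfc : Continuous f := hf.continuous
  have hfd : Differentiable ℝ f := hf.differentiable one_ne_zero
  have hdc : Continuous (deriv f) := hf.continuous_deriv le_rfl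
  have hπ : (0:ℝ) < 2 * π := by positivity
  have hPer : Function.Periodic f (2 * π) := hper
  set g : ℝ → ℝ := fun θ => f θ ^ 2 + c ^ 2 + 2 * p with hg
  have hgc : Continuous g := by continuity
  -- integral of deriv f over a period is 0
  have hint : ∫ θ in (0:ℝ)..(2 * π), deriv f θ = 0 := by
    rw [intervalIntegral.integral_deriv_eq_sub (fun x _ => hfd x)
      (hdc.intervalIntegrable _ _)]
    have := hper 0
    rw [zero_add] at this
    rw [this, sub_self]
  have hintg : ∫ θ in (0:ℝ)..(2 * π), g θ = 0 := by
    have : ∀ θ, g θ = c * deriv f θ := fun θ => (hode θ).symm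
    calc ∫ θ in (0:ℝ)..(2 * π), g θ = ∫ θ in (0:ℝ)..(2 * π), c * deriv f θ := by
            simp_rw [this]
      _ = c * ∫ θ in (0:ℝ)..(2 * π), deriv f θ := intervalIntegral.integral_const_mul _ _
      _ = 0 := by rw [hint, mul_zero]
  -- there is a zero of g
  have hzero : ∃ θ₀, g θ₀ = 0 := by
    by_contra h
    push_neg at h
    have hsign : (∀ θ, 0 < g θ) ∨ (∀ θ, g θ < 0) := by
      rcases (h 0).lt_or_gt with h0 | h0
      · right
        intro θ
        by_contra hθ
        push_neg at hθ
        have hθ' : 0 < g θ := lt_of_le_of_ne hθ (Ne.symm (h θ))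
        have : (0:ℝ) ∈ Set.uIcc (g 0) (g θ) := Set.mem_uIcc.2 (Or.inl ⟨h0.le, hθ'.le⟩)
        obtain ⟨x, _, hx⟩ := intermediate_value_uIcc (hgc.continuousOn (s := Set.uIcc 0 θ)) this
        exact h x hx
      · left
        intro θ
        by_contra hθ
        push_neg at hθ
        have hθ' : g θ < 0 := lt_of_le_of_ne hθ (h θ)
        have : (0:ℝ) ∈ Set.uIcc (g 0) (g θ) := Set.mem_uIcc.2 (Or.inr ⟨hθ'.le, h0.le⟩)
        obtain ⟨x, _, hx⟩ := intermediate_value_uIcc (hgc.continuousOn (s := Set.uIcc 0 θ)) this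
        exact h x hx
    rcases hsign with hpos | hneg
    · have : 0 < ∫ θ in (0:ℝ)..(2 * π), g θ :=
        intervalIntegral.intervalIntegral_pos_of_pos (hgc.intervalIntegrable _ _) hpos hπ
      linarith [hintg, this]
    · have : 0 < ∫ θ in (0:ℝ)..(2 * π), (-g) θ :=
        intervalIntegral.intervalIntegral_pos_of_pos (f := fun θ => -(g θ))
          ((hgc.neg).intervalIntegrable _ _) (fun θ => by simpa using (hneg θ)) hπ
      simp only [Pi.neg_apply] at this
      rw [intervalIntegral.integral_neg, hintg] at this
      simp at this
  obtain ⟨θ₀, hθ₀⟩ := hzero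
  set d : ℝ := f θ₀ with hd
  have hdne : d ≠ 0 := hne θ₀
  have hp : p = -(c ^ 2 + d ^ 2) / 2 := by
    have : d ^ 2 + c ^ 2 + 2 * p = 0 := hθ₀
    linarith
  -- bound on f
  obtain ⟨M, hM⟩ : ∃ M, ∀ θ, |f θ + d| ≤ M := by
    obtain ⟨x₀, -, hx₀⟩ := (isCompact_Icc (a := (0:ℝ)) (b := 2 * π)).exists_isMaxOn
      (Set.nonempty_Icc.2 hπ.le) ((continuous_abs.comp (hfc.add continuous_const)).continuousOn)
    refine ⟨|f x₀ + d|, fun θ => ?_⟩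
    obtain ⟨y, hy, hyeq⟩ := hPer.exists_mem_Ico₀ hπ θ
    have : f θ = f y := hyeq
    rw [this]
    exact hx₀ ⟨hy.1, hy.2.le⟩
  have hM0 : 0 ≤ M := le_trans (abs_nonneg _) (hM 0)
  -- Gronwall on u = f - d on [θ₀, θ₀ + 2π]
  set K : ℝ := M / |c| with hK
  have hKey : ∀ x ∈ Set.Icc θ₀ (θ₀ + 2 * π), f x = d := by
    intro x hx
    have := norm_le_gronwallBound_of_norm_deriv_right_le
      (f := fun θ => f θ - d) (f' := deriv f) (δ := 0) (K := K) (ε := 0)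
      (a := θ₀) (b := θ₀ + 2 * π)
      ((hfc.sub continuous_const).continuousOn)
      (fun y _ => by
        have : HasDerivAt (fun θ => f θ - d) (deriv f y) y := by
          simpa using ((hfd y).hasDerivAt.sub_const d)
        exact this.hasDerivWithinAt)
      (by simp [hd])
      (fun y _ => by
        have hdf : deriv f y = (f y + d) * (f y - d) / c := by
          have h1 := hode y
          have h2 : d ^ 2 + c ^ 2 + 2 * p = 0 := hθ₀
          field_simp
          nlinarith [h1, h2]
        rw [hdf]
        rw [Real.norm_eq_abs, Real.norm_eq_abs, abs_div, abs_mul]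
        rw [add_zero, hK, div_mul_eq_mul_div]
        gcongr
        exact hM y)
      x hx
    rw [gronwallBound_ε0_δ0] at this
    have : |f x - d| ≤ 0 := by simpa [Real.norm_eq_abs] using this
    have := abs_nonpos_iff.mp this
    linarith [this]
  refine ⟨d, hdne, fun θ => ?_, hp⟩
  obtain ⟨y, hy, hyeq⟩ := hPer.exists_mem_Ico hπ θ θ₀
  rw [hyeq]
  exact hKey y ⟨hy.1, hy.2.le⟩
end

section
/- Let c ≠ 0 and v : [0,θ₀] → ℝ be a constant function v ≡ c, let f ∈ C¹([0,θ₀]) satisfy c·f' = f² + c² + 2p for a constant p, and define in polar coordinates u = (c/r)e_θ + (f(θ)/r)e_r, P = p/r² on a sector {a < r < b, 0 < θ < θ₀}. Then (u, P) satisfies the stationary incompressible Euler equations u·∇u = -∇P and div u = 0. -/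
theorem minus_one_homogeneous_solves_euler
    (c p a b θ₀ : ℝ) (hc : c ≠ 0) (hab : 0 ≤ a ∧ a < b) (hθ₀ : 0 < θ₀)
    (f : ℝ → ℝ) (hf : ContDiff ℝ 1 f)
    (hode : ∀ θ, c * deriv f θ = (f θ) ^ 2 + c ^ 2 + 2 * p)
    (ur uθ P : ℝ → ℝ → ℝ)
    (hur : ∀ r θ, ur r θ = f θ / r)
    (huθ : ∀ r θ, uθ r θ = c / r)
    (hP : ∀ r θ, P r θ = p / r ^ 2) :
    ∀ r θ : ℝ, a < r → r < b → 0 < θ → θ < θ₀ →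
      -- radial momentum equation
      (ur r θ * deriv (fun s => ur s θ) r
        + (uθ r θ / r) * deriv (fun t => ur r t) θ
        - (uθ r θ) ^ 2 / r + deriv (fun s => P s θ) r = 0) ∧
      -- angular momentum equation
      (ur r θ * deriv (fun s => uθ s θ) r
        + (uθ r θ / r) * deriv (fun t => uθ r t) θ
        + uθ r θ * ur r θ / r + (1 / r) * deriv (fun t => P r t) θ = 0) ∧
      -- incompressibility
      (deriv (fun s => s * ur s θ) r + deriv (fun t => uθ r t) θ = 0) := by
  intro r θ har hrb _ _
  have hr : 0 < r := lt_of_le_of_lt hab.1 har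
  have hrne : r ≠ 0 := hr.ne'
  simp only [hur, huθ, hP]
  have hdiff : DifferentiableAt ℝ f θ := hf.differentiable one_ne_zero θ
  -- derivative of s ↦ f θ / s at r
  have d1 : deriv (fun s => f θ / s) r = -(f θ) / r ^ 2 := by
    have : HasDerivAt (fun s : ℝ => f θ / s) (f θ * (-(r ^ 2)⁻¹)) r := by
      simpa [div_eq_mul_inv] using (hasDerivAt_inv hrne).const_mul (f θ)
    rw [this.deriv]; field_simp
  -- derivative of t ↦ f t / r at θ
  have d2 : deriv (fun t => f t / r) θ = deriv f θ / r := by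
    simp [deriv_div_const]
  -- derivative of s ↦ c / s at r
  have d3 : deriv (fun s => c / s) r = -c / r ^ 2 := by
    have : HasDerivAt (fun s : ℝ => c / s) (c * (-(r ^ 2)⁻¹)) r := by
      simpa [div_eq_mul_inv] using (hasDerivAt_inv hrne).const_mul c
    rw [this.deriv]; field_simp
  -- derivative of s ↦ p / s ^ 2 at r
  have d4 : deriv (fun s => p / s ^ 2) r = -2 * p / r ^ 3 := by
    have h2 : HasDerivAt (fun s : ℝ => s ^ 2) (2 * r) r := by
      simpa [mul_comm] using hasDerivAt_pow 2 r
    rw [((hasDerivAt_const r p).fun_div h2 (pow_ne_zero 2 hrne)).deriv]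
    field_simp; ring
  -- derivative of s ↦ s * (f θ / s) at r
  have d5 : deriv (fun s => s * (f θ / s)) r = 0 := by
    have heq : (fun s : ℝ => s * (f θ / s)) =ᶠ[nhds r] fun _ => f θ := by
      filter_upwards [eventually_ne_nhds hrne] with s hs
      field_simp
    rw [heq.deriv_eq, deriv_const]
  rw [d1, d2, d3, d4, d5]
  simp only [deriv_const]
  refine ⟨?_, ?_, ?_⟩
  · have h := hode θ
    have hd : deriv f θ = (f θ ^ 2 + c ^ 2 + 2 * p) / c := by
      field_simp; linarith
    rw [hd]; field_simp; ring
  · field_simp; ring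
  · simp
end
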